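/- Let ξ ∈ L²(ℝ^m) with 𝔼[ξ | 𝓐] = 0. Define ξ₁ = ξ and inductively let ηₙ be a best L² approximation of ξₙ among random variables independent of 𝓐, with ξ_{n+1} = ξₙ − ηₙ. Then for each n, ‖ξ₁‖² = ‖ξ_{n+1}‖² + ‖η₁‖² + ⋯ + ‖ηₙ‖², and consequently ‖η₁ + ⋯ + ηₙ‖ ≤ 2‖ξ‖. -/

import Mathlib

open MeasureTheory ProbabilityTheory MeasurableSpace
open scoped ENNReal RealInnerProductSpace

private lemma inner_eq_zero_of_norm_le {F : Type*} [NormedAddCommGroup F]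
    [InnerProductSpace ℝ F] (x y : F) (h : ∀ t : ℝ, ‖x‖ ≤ ‖x - t • y‖) :
    ⟪x, y⟫ = 0 := by
  set c : ℝ := ⟪x, y⟫ with hc
  have key : ∀ t : ℝ, 0 ≤ t ^ 2 * ‖y‖ ^ 2 - 2 * t * c := by
    intro t
    have h1 := h t
    have h2 : ‖x - t • y‖ ^ 2 = ‖x‖ ^ 2 - 2 * (t * c) + t ^ 2 * ‖y‖ ^ 2 := by
      rw [norm_sub_sq_real, real_inner_smul_right, norm_smul, Real.norm_eq_abs,
        mul_pow, sq_abs]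
    nlinarith [norm_nonneg x, norm_nonneg (x - t • y)]
  set d : ℝ := ‖y‖ ^ 2 with hd
  have hd0 : (0:ℝ) ≤ d := sq_nonneg _
  have hc2 : c ^ 2 ≤ 0 := by
    rcases eq_or_lt_of_le hd0 with hdz | hdp
    · have hk := key c
      rw [← hdz] at hk
      nlinarith [hk]
    · have hk := key (c / d)
      have hmul : (0:ℝ) ≤ ((c / d) ^ 2 * d - 2 * (c / d) * c) * d :=
        mul_nonneg hk hd0
      have hexp : ((c / d) ^ 2 * d - 2 * (c / d) * c) * d = -c ^ 2 := by
        field_simp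
        ring
      rw [hexp] at hmul
      linarith
  have hc0 : c ^ 2 = 0 := le_antisymm hc2 (sq_nonneg c)
  exact pow_eq_zero_iff two_ne_zero |>.mp hc0

/-- For the successive best `L²` approximations `ηₙ` of `ξ` by variables independent of `𝓐`
(with `ξ₁ = ξ`, `ξ_{n+1} = ξₙ - ηₙ`), one has for each `n`
`‖ξ₁‖² = ‖ξ_{n+1}‖² + ‖η₁‖² + ⋯ + ‖ηₙ‖²`, hence `‖η₁ + ⋯ + ηₙ‖ ≤ 2‖ξ‖`. -/
theorem successive_approx_norm_identity {Ω : Type*} (𝓐 : MeasurableSpace Ω)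
    [mΩ : MeasurableSpace Ω] (μ : Measure Ω) [IsProbabilityMeasure μ]
    (h𝓐 : 𝓐 ≤ mΩ) (m : ℕ)
    (hatomless : ∃ U : Ω → ℝ, Measurable U ∧ μ.map U = volume.restrict (Set.Icc (0:ℝ) 1) ∧
      Indep (MeasurableSpace.comap U inferInstance) 𝓐 μ)
    (ξ : Ω → EuclideanSpace ℝ (Fin m)) (hξ : MemLp ξ 2 μ) (hξ0 : μ[ξ|𝓐] =ᵐ[μ] 0)
    (ξs η : ℕ → Ω → EuclideanSpace ℝ (Fin m))
    (hinit : ξs 0 = ξ) (hstep : ∀ n, ξs (n + 1) = ξs n - η n)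
    (hηmem : ∀ n, MemLp (η n) 2 μ)
    (hηindep : ∀ n, Indep (MeasurableSpace.comap (η n) inferInstance) 𝓐 μ)
    (hbest : ∀ n, ∀ ζ : Ω → EuclideanSpace ℝ (Fin m), MemLp ζ 2 μ →
      Indep (MeasurableSpace.comap ζ inferInstance) 𝓐 μ →
      eLpNorm (ξs n - η n) 2 μ ≤ eLpNorm (ξs n - ζ) 2 μ) :
    ∀ n, eLpNorm ξ 2 μ ^ 2
        = eLpNorm (ξs n) 2 μ ^ 2 + ∑ j ∈ Finset.range n, eLpNorm (η j) 2 μ ^ 2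
      ∧ eLpNorm (fun ω => ∑ j ∈ Finset.range n, η j ω) 2 μ ≤ 2 * eLpNorm ξ 2 μ := by
  -- membership of all ξs n in L²
  have hξsmem : ∀ n, MemLp (ξs n) 2 μ := by
    intro n
    induction n with
    | zero => rw [hinit]; exact hξ
    | succ n ih => rw [hstep]; exact ih.sub (hηmem n)
  -- Lp space representatives
  set F : ℕ → Lp (EuclideanSpace ℝ (Fin m)) 2 μ := fun n => (hξsmem n).toLp _ with hFdef
  set G : ℕ → Lp (EuclideanSpace ℝ (Fin m)) 2 μ := fun n => (hηmem n).toLp _ with hGdef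
  have hFnorm : ∀ n, ‖F n‖ = (eLpNorm (ξs n) 2 μ).toReal := fun n =>
    Lp.norm_toLp _ _
  have hGnorm : ∀ n, ‖G n‖ = (eLpNorm (η n) 2 μ).toReal := fun n =>
    Lp.norm_toLp _ _
  have hFsucc : ∀ n, F (n + 1) = F n - G n := by
    intro n
    rw [hFdef]
    simp only
    rw [MemLp.toLp_congr (hξsmem (n+1)) ((hξsmem n).sub (hηmem n))
      (by rw [hstep n]), MemLp.toLp_sub]
  -- orthogonality
  have horth : ∀ n, ⟪F (n + 1), G n⟫ = 0 := by
    intro n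
    apply inner_eq_zero_of_norm_le
    intro t
    -- the competitor ζ = (1 + t) • η n
    set ζ : Ω → EuclideanSpace ℝ (Fin m) := fun ω => (1 + t) • η n ω with hζdef
    have hζmem : MemLp ζ 2 μ := (hηmem n).const_smul (1 + t)
    have hζle : MeasurableSpace.comap ζ inferInstance ≤
        MeasurableSpace.comap (η n) inferInstance := by
      rintro s ⟨A, hA, rfl⟩
      exact ⟨(fun x : EuclideanSpace ℝ (Fin m) => (1 + t) • x) ⁻¹' A,
        (measurable_const_smul (1 + t)) hA, rfl⟩
    have hζindep : Indep (MeasurableSpace.comap ζ inferInstance) 𝓐 μ :=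
      indep_of_indep_of_le_left (hηindep n) hζle
    have hle := hbest n ζ hζmem hζindep
    have heq1 : ξs n - η n = ξs (n + 1) := (hstep n).symm
    have heq2 : ξs n - ζ = ξs (n + 1) - fun ω => t • η n ω := by
      funext ω
      simp only [hζdef, Pi.sub_apply, hstep n]
      module
    rw [heq1, heq2] at hle
    have hR : eLpNorm (ξs (n+1) - fun ω => t • η n ω) 2 μ ≠ ⊤ :=
      ((hξsmem (n+1)).sub ((hηmem n).const_smul t)).2.ne
    -- rewrite both sides as Lp norms
    have hL : ‖F (n + 1)‖ = (eLpNorm (ξs (n+1)) 2 μ).toReal := hFnorm (n+1)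
    have hRnorm : ‖F (n + 1) - t • G n‖
        = (eLpNorm (ξs (n+1) - fun ω => t • η n ω) 2 μ).toReal := by
      rw [Lp.norm_def]
      congr 1
      apply eLpNorm_congr_ae
      filter_upwards [Lp.coeFn_sub (F (n+1)) (t • G n), Lp.coeFn_smul t (G n),
        (hξsmem (n+1)).coeFn_toLp, (hηmem n).coeFn_toLp] with ω h1 h2 h3 h4
      simp only [h1, Pi.sub_apply, h2, Pi.smul_apply, h3, h4]
      exact congrArg₂ (fun a b => a - t • b) h3 h4
    rw [hL, hRnorm]
    exact ENNReal.toReal_mono hR hle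
  -- Pythagoras step
  have hpyth : ∀ n, ‖F n‖ ^ 2 = ‖F (n + 1)‖ ^ 2 + ‖G n‖ ^ 2 := by
    intro n
    have : F n = F (n + 1) + G n := by rw [hFsucc n]; abel
    rw [this, norm_add_sq_real, horth n]
    ring
  -- real-valued identity
  have hreal : ∀ n, ‖F 0‖ ^ 2 = ‖F n‖ ^ 2 + ∑ j ∈ Finset.range n, ‖G j‖ ^ 2 := by
    intro n
    induction n with
    | zero => simp
    | succ n ih => rw [ih, Finset.sum_range_succ, hpyth n]; ring
  -- conversion to ENNReal
  have hconvF : ∀ n, eLpNorm (ξs n) 2 μ ^ 2 = ENNReal.ofReal (‖F n‖ ^ 2) := by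
    intro n
    rw [ENNReal.ofReal_pow (norm_nonneg _), hFnorm,
      ENNReal.ofReal_toReal (hξsmem n).2.ne]
  have hconvG : ∀ n, eLpNorm (η n) 2 μ ^ 2 = ENNReal.ofReal (‖G n‖ ^ 2) := by
    intro n
    rw [ENNReal.ofReal_pow (norm_nonneg _), hGnorm,
      ENNReal.ofReal_toReal (hηmem n).2.ne]
  have hident : ∀ n, eLpNorm ξ 2 μ ^ 2
      = eLpNorm (ξs n) 2 μ ^ 2 + ∑ j ∈ Finset.range n, eLpNorm (η j) 2 μ ^ 2 := by
    intro n
    rw [← hinit, hconvF 0, hconvF n]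
    rw [Finset.sum_congr rfl (fun j _ => hconvG j),
      ← ENNReal.ofReal_sum_of_nonneg (fun j _ => sq_nonneg _),
      ← ENNReal.ofReal_add (sq_nonneg _) (Finset.sum_nonneg fun j _ => sq_nonneg _)]
    exact congrArg ENNReal.ofReal (hreal n)
  intro n
  refine ⟨hident n, ?_⟩
  -- telescoping
  have hdiff : (fun ω => ∑ j ∈ Finset.range n, η j ω) = ξ - ξs n := by
    induction n with
    | zero =>
      funext ω
      simp [hinit]
    | succ k ih =>
      funext ω
      have := congrFun ih ω
      simp only [Finset.sum_range_succ, Pi.sub_apply] at this ⊢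
      rw [this, hstep k]
      simp only [Pi.sub_apply]
      abel
  have hξsn_le : eLpNorm (ξs n) 2 μ ≤ eLpNorm ξ 2 μ := by
    by_contra hlt
    push_neg at hlt
    have h2 : eLpNorm ξ 2 μ ^ 2 < eLpNorm (ξs n) 2 μ ^ 2 :=
      ENNReal.pow_lt_pow_left two_ne_zero hlt
    have h3 : eLpNorm (ξs n) 2 μ ^ 2 ≤ eLpNorm ξ 2 μ ^ 2 := by
      rw [hident n]; exact le_self_add
    exact absurd (h3.trans_lt h2) (lt_irrefl _)
  calc eLpNorm (fun ω => ∑ j ∈ Finset.range n, η j ω) 2 μ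
      = eLpNorm (ξ - ξs n) 2 μ := by rw [hdiff]
    _ ≤ eLpNorm ξ 2 μ + eLpNorm (ξs n) 2 μ :=
        eLpNorm_sub_le hξ.aestronglyMeasurable (hξsmem n).aestronglyMeasurable one_le_two
    _ ≤ eLpNorm ξ 2 μ + eLpNorm ξ 2 μ := add_le_add le_rfl hξsn_le
    _ = 2 * eLpNorm ξ 2 μ := (two_mul _).symm
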